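/- arXiv:2412.09390 — 4 statements merged into one kernel-verified Lean document; each statement's English description precedes it below -/
import Mathlib

section
/- Let E ⊆ [1,2] with upper Minkowski dimension β and quasi-Assouad dimension γ > 0. Then for every α ≥ 0, ν♯(α) ≤ max(α, (1 − β/γ)α + β). In particular, ν♯(α) = α whenever α ≥ γ. -/
open MeasureTheory Filter Set

noncomputable section

/-- Minimal number of closed intervals of length `δ` needed to cover `A`. -/
def coverN (A : Set ℝ) (δ : ℝ) : ℕ :=
  sInf {n : ℕ | ∃ c : Fin n → ℝ, A ⊆ ⋃ i, Set.Icc (c i) (c i + δ)}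

/-- The upper Minkowski dimension of `E`. -/
def upperMink (E : Set ℝ) : ℝ :=
  Filter.limsup (fun δ : ℝ => Real.log (coverN E δ) / Real.log (1/δ))
    (nhdsWithin 0 (Set.Ioi 0))

/-- The quantity `ν♯(α)`. -/
def nuSharp (E : Set ℝ) (α : ℝ) : ℝ :=
  Filter.limsup (fun δ : ℝ =>
    Real.log (sSup {v : ℝ | ∃ a b : ℝ, 1 ≤ a ∧ a ≤ b ∧ b ≤ 2 ∧ δ ≤ b - a ∧
      v = Real.rpow (b - a) (-α) * (coverN (E ∩ Set.Icc a b) δ : ℝ)}) / Real.log (1/δ))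
    (nhdsWithin 0 (Set.Ioi 0))


/-- The upper Assouad spectrum of `E` at `θ`: the infimum of all `a > 0` for which
there is `c > 0` such that `N(E ∩ J, δ) ≤ c (|J|/δ)^a` for all `δ ∈ (0,1)` and all
intervals `J ⊆ [1,2]` with `|J| ≥ δ^θ`. -/
def upperAssouadSpec (E : Set ℝ) (θ : ℝ) : ℝ :=
  sInf {a : ℝ | 0 < a ∧ ∃ c : ℝ, 0 < c ∧ ∀ δ ∈ Set.Ioo (0:ℝ) 1, ∀ x y : ℝ,
    1 ≤ x → x ≤ y → y ≤ 2 → Real.rpow δ θ ≤ y - x →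
    (coverN (E ∩ Set.Icc x y) δ : ℝ) ≤ c * Real.rpow ((y - x)/δ) a}

/-! ### Auxiliary definitions and lemmas -/

/-- The set of admissible cover sizes. -/
def covSet (A : Set ℝ) (δ : ℝ) : Set ℕ :=
  {n : ℕ | ∃ c : Fin n → ℝ, A ⊆ ⋃ i, Set.Icc (c i) (c i + δ)}

lemma coverN_eq_sInf (A : Set ℝ) (δ : ℝ) : coverN A δ = sInf (covSet A δ) := rfl

lemma covSet_mem {A : Set ℝ} {x y δ : ℝ} (hA : A ⊆ Set.Icc x y) (hδ : 0 < δ)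
    {n : ℕ} (hn : 0 < n) (hny : y - x ≤ n * δ) : n ∈ covSet A δ := by
  refine ⟨fun i => x + i * δ, fun z hz => ?_⟩
  obtain ⟨hz1, hz2⟩ := hA hz
  set r : ℝ := (z - x) / δ with hr
  have hr0 : 0 ≤ r := div_nonneg (by linarith) hδ.le
  have hfl0 : 0 ≤ ⌊r⌋ := Int.floor_nonneg.2 hr0
  set k : ℕ := ⌊r⌋.toNat with hk
  have hkZ : ((k : ℤ) : ℝ) = ((⌊r⌋ : ℤ) : ℝ) := by
    exact_mod_cast congrArg (fun z : ℤ => (z : ℝ)) (Int.toNat_of_nonneg hfl0)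
  have hkr : (k : ℝ) ≤ r := by
    rw [show ((k:ℝ)) = ((k:ℤ):ℝ) by push_cast; ring, hkZ]
    exact Int.floor_le r
  have hrk : r < (k : ℝ) + 1 := by
    rw [show ((k:ℝ)) = ((k:ℤ):ℝ) by push_cast; ring, hkZ]
    exact Int.lt_floor_add_one r
  set j : ℕ := min k (n - 1) with hj
  have hjn : j < n := lt_of_le_of_lt (min_le_right _ _) (by omega)
  refine Set.mem_iUnion.2 ⟨⟨j, hjn⟩, ?_⟩
  have hzx : z - x = r * δ := by rw [hr]; exact (div_mul_cancel₀ (z - x) hδ.ne').symm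
  constructor
  · have hjr : (j : ℝ) ≤ r := le_trans (by exact_mod_cast min_le_left k (n-1)) hkr
    simp only []
    nlinarith
  · rcases le_or_gt k (n - 1) with h | h
    · have hjk : j = k := by omega
      simp only [hjk]
      nlinarith
    · have hjk : j = n - 1 := by omega
      have hjn1 : (j : ℝ) + 1 = (n : ℝ) := by
        rw [hjk]; push_cast [Nat.cast_sub hn]; ring
      simp only []
      nlinarith

lemma covSet_nonempty {A : Set ℝ} {x y δ : ℝ} (hA : A ⊆ Set.Icc x y) (hxy : x ≤ y)
    (hδ : 0 < δ) : (covSet A δ).Nonempty := by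
  refine ⟨⌈(y - x)/δ⌉₊ + 1, covSet_mem hA hδ (Nat.succ_pos _) ?_⟩
  have h1 : (y - x)/δ ≤ (⌈(y - x)/δ⌉₊ : ℝ) := Nat.le_ceil _
  have h2 : (y - x) ≤ (⌈(y - x)/δ⌉₊ : ℝ) * δ := by
    rw [div_le_iff₀ hδ] at h1; linarith
  push_cast
  nlinarith

lemma coverN_le_real {A : Set ℝ} {x y δ : ℝ} (hA : A ⊆ Set.Icc x y) (hxy : x ≤ y)
    (hδ : 0 < δ) : (coverN A δ : ℝ) ≤ (y - x)/δ + 2 := by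
  have hm : coverN A δ ≤ ⌈(y - x)/δ⌉₊ + 1 := by
    apply Nat.sInf_le
    refine covSet_mem hA hδ (Nat.succ_pos _) ?_
    have h1 : (y - x)/δ ≤ (⌈(y - x)/δ⌉₊ : ℝ) := Nat.le_ceil _
    rw [div_le_iff₀ hδ] at h1
    push_cast; nlinarith
  have h2 : (⌈(y - x)/δ⌉₊ : ℝ) ≤ (y - x)/δ + 1 :=
    (Nat.ceil_lt_add_one (div_nonneg (by linarith) hδ.le)).le
  calc (coverN A δ : ℝ) ≤ (⌈(y - x)/δ⌉₊ : ℝ) + 1 := by exact_mod_cast hm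
    _ ≤ (y - x)/δ + 2 := by linarith

lemma coverN_mono {A B : Set ℝ} {δ : ℝ} (h : A ⊆ B) (hne : (covSet B δ).Nonempty) :
    coverN A δ ≤ coverN B δ := by
  obtain ⟨c, hc⟩ := Nat.sInf_mem hne
  exact Nat.sInf_le ⟨c, h.trans hc⟩

lemma one_le_coverN {A : Set ℝ} {δ : ℝ} (hA : A.Nonempty) (hne : (covSet A δ).Nonempty) :
    1 ≤ coverN A δ := by
  rcases Nat.eq_zero_or_pos (coverN A δ) with h0 | h
  · exfalso
    have := Nat.sInf_mem hne
    rw [← coverN_eq_sInf, h0] at this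
    obtain ⟨c, hc⟩ := this
    obtain ⟨e, he⟩ := hA
    have := hc he
    simp at this
  · exact h

/-- The set appearing in the definition of the Assouad spectrum. -/
def specSet (E : Set ℝ) (θ : ℝ) : Set ℝ :=
  {a : ℝ | 0 < a ∧ ∃ c : ℝ, 0 < c ∧ ∀ δ ∈ Set.Ioo (0:ℝ) 1, ∀ x y : ℝ,
    1 ≤ x → x ≤ y → y ≤ 2 → Real.rpow δ θ ≤ y - x →
    (coverN (E ∩ Set.Icc x y) δ : ℝ) ≤ c * Real.rpow ((y - x)/δ) a}

lemma upperAssouadSpec_eq (E : Set ℝ) (θ : ℝ) :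
    upperAssouadSpec E θ = sInf (specSet E θ) := rfl

lemma rpow_theta_bounds {δ θ : ℝ} (hδ : δ ∈ Set.Ioo (0:ℝ) 1) (hθ0 : 0 ≤ θ) (hθ1 : θ ≤ 1) :
    δ ≤ Real.rpow δ θ ∧ Real.rpow δ θ ≤ 1 := by
  obtain ⟨h0, h1⟩ := hδ
  constructor
  · calc δ = Real.rpow δ 1 := (Real.rpow_one δ).symm
      _ ≤ Real.rpow δ θ := Real.rpow_le_rpow_of_exponent_ge h0 h1.le hθ1
  · exact Real.rpow_le_one h0.le h1.le hθ0

lemma ratio_ge_one {δ θ x y : ℝ} (hδ : δ ∈ Set.Ioo (0:ℝ) 1) (hθ0 : 0 ≤ θ) (hθ1 : θ ≤ 1)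
    (hxy : Real.rpow δ θ ≤ y - x) : 1 ≤ (y - x)/δ := by
  have h := (rpow_theta_bounds hδ hθ0 hθ1).1
  rw [le_div_iff₀ hδ.1]
  linarith

lemma two_mem_specSet (E : Set ℝ) (hE : E ⊆ Set.Icc 1 2) {θ : ℝ} (hθ0 : 0 < θ) (hθ1 : θ ≤ 1) :
    (2:ℝ) ∈ specSet E θ := by
  refine ⟨two_pos, 3, by norm_num, fun δ hδ x y hx hxy hy hlen => ?_⟩
  set R : ℝ := (y - x)/δ with hR
  have hR1 : 1 ≤ R := ratio_ge_one hδ hθ0.le hθ1 hlen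
  have hb : (coverN (E ∩ Set.Icc x y) δ : ℝ) ≤ R + 2 :=
    coverN_le_real (Set.inter_subset_right) hxy hδ.1
  calc (coverN (E ∩ Set.Icc x y) δ : ℝ) ≤ R + 2 := hb
    _ ≤ 3 * Real.rpow R 2 := by
        rw [show Real.rpow R 2 = R ^ (2:ℕ) by rw [← Real.rpow_natCast]; norm_num]
        nlinarith

lemma specSet_upward (E : Set ℝ) {θ : ℝ} (hθ0 : 0 < θ) (hθ1 : θ ≤ 1) {a a' : ℝ}
    (ha : a ∈ specSet E θ) (haa : a ≤ a') : a' ∈ specSet E θ := by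
  obtain ⟨ha0, c, hc0, hc⟩ := ha
  refine ⟨lt_of_lt_of_le ha0 haa, c, hc0, fun δ hδ x y hx hxy hy hlen => ?_⟩
  refine (hc δ hδ x y hx hxy hy hlen).trans ?_
  have hR1 : 1 ≤ (y - x)/δ := ratio_ge_one hδ hθ0.le hθ1 hlen
  exact mul_le_mul_of_nonneg_left (Real.rpow_le_rpow_of_exponent_le hR1 haa) hc0.le

lemma coverN_small_interval (E : Set ℝ) {θ a c δ x y : ℝ} (hθ0 : 0 < θ) (hθ1 : θ ≤ 1)
    (hspec : ∀ δ ∈ Set.Ioo (0:ℝ) 1, ∀ x y : ℝ,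
      1 ≤ x → x ≤ y → y ≤ 2 → Real.rpow δ θ ≤ y - x →
      (coverN (E ∩ Set.Icc x y) δ : ℝ) ≤ c * Real.rpow ((y - x)/δ) a)
    (hδ : δ ∈ Set.Ioo (0:ℝ) 1) (hx : 1 ≤ x) (hxy : x ≤ y) (hy : y ≤ 2)
    (hsmall : y - x ≤ Real.rpow δ θ) :
    (coverN (E ∩ Set.Icc x y) δ : ℝ) ≤ c * Real.rpow (Real.rpow δ θ / δ) a := by
  set T : ℝ := Real.rpow δ θ with hT
  obtain ⟨hδT, hT1⟩ := rpow_theta_bounds hδ hθ0.le hθ1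
  set x' : ℝ := min x (2 - T) with hx'
  have hx'1 : 1 ≤ x' := le_min hx (by linarith)
  have hx'x : x' ≤ x := min_le_left _ _
  have hy' : x' + T ≤ 2 := by
    rcases le_or_gt x (2 - T) with h | h
    · have hx'e : x' = x := min_eq_left h
      rw [hx'e]; linarith
    · have hx'e : x' = 2 - T := min_eq_right h.le
      rw [hx'e]; linarith
  have hyy' : y ≤ x' + T := by
    rcases le_or_gt x (2 - T) with h | h
    · have : x' = x := min_eq_left h
      rw [this]; linarith
    · have : x' = 2 - T := min_eq_right h.le
      rw [this]; linarith
  have hsub : E ∩ Set.Icc x y ⊆ E ∩ Set.Icc x' (x' + T) :=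
    Set.inter_subset_inter_right E (Set.Icc_subset_Icc hx'x hyy')
  have hmono : coverN (E ∩ Set.Icc x y) δ ≤ coverN (E ∩ Set.Icc x' (x' + T)) δ :=
    coverN_mono hsub (covSet_nonempty Set.inter_subset_right (by linarith [hδ.1]) hδ.1)
  have happ := hspec δ hδ x' (x' + T) hx'1 (by linarith [hδ.1]) hy' (le_of_eq (by ring))
  calc (coverN (E ∩ Set.Icc x y) δ : ℝ) ≤ (coverN (E ∩ Set.Icc x' (x' + T)) δ : ℝ) := by
        exact_mod_cast hmono
    _ ≤ c * Real.rpow ((x' + T - x')/δ) a := happ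
    _ = c * Real.rpow (T / δ) a := by ring_nf

lemma ev_small (r : ℝ) (hr : 0 < r) : ∀ᶠ δ : ℝ in nhdsWithin 0 (Set.Ioi 0), δ ∈ Set.Ioo (0:ℝ) r := by
  have h1 : Set.Ioo (0:ℝ) r ∈ nhdsWithin 0 (Set.Ioi 0) :=
    Ioo_mem_nhdsGT_of_mem (by simp [hr])
  exact h1

lemma ev_log_div_le {c : ℝ} (ε : ℝ) (hε : 0 < ε) :
    ∀ᶠ δ : ℝ in nhdsWithin 0 (Set.Ioi 0), Real.log c / Real.log (1/δ) ≤ ε := by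
  have h1 : Filter.Tendsto (fun δ : ℝ => Real.log (1/δ)) (nhdsWithin 0 (Set.Ioi 0)) Filter.atTop := by
    have h0 : Filter.Tendsto (fun δ : ℝ => 1/δ) (nhdsWithin 0 (Set.Ioi 0)) Filter.atTop := by
      simpa using tendsto_inv_nhdsGT_zero
    exact Real.tendsto_log_atTop.comp h0
  filter_upwards [h1.eventually_ge_atTop (max (Real.log c / ε) 1)] with δ hδ
  have hpos : (0:ℝ) < Real.log (1/δ) := lt_of_lt_of_le one_pos (le_trans (le_max_right _ _) hδ)
  rw [div_le_iff₀ hpos]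
  have : Real.log c / ε ≤ Real.log (1/δ) := le_trans (le_max_left _ _) hδ
  rw [div_le_iff₀ hε] at this
  linarith [this]

lemma g_nonneg_ev {E : Set ℝ} (hE : E ⊆ Set.Icc 1 2) (hne : E.Nonempty) :
    ∀ᶠ δ : ℝ in nhdsWithin 0 (Set.Ioi 0),
      0 ≤ Real.log (coverN E δ) / Real.log (1/δ) := by
  filter_upwards [ev_small 1 one_pos] with δ hδ
  have h1 : 1 ≤ coverN E δ := one_le_coverN hne (covSet_nonempty hE one_le_two hδ.1)
  have h2 : (0:ℝ) < Real.log (1/δ) := Real.log_pos (by rw [lt_div_iff₀ hδ.1]; linarith [hδ.2])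
  exact div_nonneg (Real.log_nonneg (by exact_mod_cast h1)) h2.le

lemma g_le_two_ev {E : Set ℝ} (hE : E ⊆ Set.Icc 1 2) (hne : E.Nonempty) :
    ∀ᶠ δ : ℝ in nhdsWithin 0 (Set.Ioi 0),
      Real.log (coverN E δ) / Real.log (1/δ) ≤ 2 := by
  filter_upwards [ev_small (1/3) (by norm_num)] with δ hδ
  obtain ⟨h0, h3⟩ := hδ
  have hinv : (3:ℝ) ≤ 1/δ := by rw [le_div_iff₀ h0]; linarith
  have h2 : (0:ℝ) < Real.log (1/δ) := Real.log_pos (by linarith)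
  have hub : (coverN E δ : ℝ) ≤ (1/δ)^(2:ℕ) := by
    have := coverN_le_real hE one_le_two h0
    have : (coverN E δ : ℝ) ≤ (2-1)/δ + 2 := this
    nlinarith
  have hpos : (0:ℝ) < (coverN E δ : ℝ) := by
    have h1 : 1 ≤ coverN E δ := one_le_coverN hne (covSet_nonempty hE one_le_two h0)
    exact_mod_cast h1
  have hlog : Real.log (coverN E δ) ≤ 2 * Real.log (1/δ) := by
    calc Real.log (coverN E δ) ≤ Real.log ((1/δ)^(2:ℕ)) := Real.log_le_log hpos hub
      _ = 2 * Real.log (1/δ) := by rw [Real.log_pow]; push_cast; ring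
  rw [div_le_iff₀ h2]; linarith

lemma mink_bounded {E : Set ℝ} (hE : E ⊆ Set.Icc 1 2) (hne : E.Nonempty) :
    Filter.IsBoundedUnder (· ≤ ·) (nhdsWithin (0:ℝ) (Set.Ioi 0))
      (fun δ : ℝ => Real.log (coverN E δ) / Real.log (1/δ)) :=
  ⟨2, Filter.eventually_map.2 (g_le_two_ev hE hne)⟩

lemma mink_ev {E : Set ℝ} (hE : E ⊆ Set.Icc 1 2) (hne : E.Nonempty) {ε : ℝ} (hε : 0 < ε) :
    ∀ᶠ δ : ℝ in nhdsWithin 0 (Set.Ioi 0),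
      (coverN E δ : ℝ) ≤ Real.rpow δ (-(upperMink E + ε)) := by
  have hlim : Filter.limsup (fun δ : ℝ => Real.log (coverN E δ) / Real.log (1/δ))
      (nhdsWithin 0 (Set.Ioi 0)) < upperMink E + ε := by
    rw [show Filter.limsup (fun δ : ℝ => Real.log (coverN E δ) / Real.log (1/δ))
      (nhdsWithin 0 (Set.Ioi 0)) = upperMink E from rfl]
    linarith
  filter_upwards [Filter.eventually_lt_of_limsup_lt hlim (mink_bounded hE hne),
    ev_small 1 one_pos] with δ hlt hδ
  obtain ⟨h0, h1⟩ := hδ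
  have hL : (0:ℝ) < Real.log (1/δ) := Real.log_pos (by rw [lt_div_iff₀ h0]; linarith)
  have hlog : Real.log (coverN E δ) ≤ (upperMink E + ε) * Real.log (1/δ) := by
    rw [div_lt_iff₀ hL] at hlt; linarith
  have hpos : (0:ℝ) < (coverN E δ : ℝ) := by
    exact_mod_cast one_le_coverN hne (covSet_nonempty hE one_le_two h0)
  have : (coverN E δ : ℝ) ≤ (1/δ) ^ (upperMink E + ε) := by
    rw [Real.rpow_def_of_pos (by positivity)]
    calc (coverN E δ : ℝ) = Real.exp (Real.log (coverN E δ)) := (Real.exp_log hpos).symm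
      _ ≤ Real.exp (Real.log (1/δ) * (upperMink E + ε)) := by
          apply Real.exp_le_exp.2; linarith [hlog]
  show (coverN E δ : ℝ) ≤ δ ^ (-(upperMink E + ε))
  rw [show δ ^ (-(upperMink E + ε)) = (1/δ) ^ (upperMink E + ε) by
    rw [one_div, Real.inv_rpow h0.le, ← Real.rpow_neg h0.le]]
  exact this


lemma rpow_eq_exp {x : ℝ} (hx : 0 < x) (y : ℝ) : x ^ y = Real.exp (y * Real.log x) := by
  rw [Real.rpow_def_of_pos hx]; ring_nf

lemma interpolation {t δ c a α β' : ℝ} (ht : 0 < t) (hδ : 0 < δ) (hc : 0 < c)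
    (ha : 0 < a) (hα : 0 ≤ α) (hαa : α ≤ a) {V : ℝ} (hV : 0 ≤ V)
    (hX : V ≤ t^(-α) * (c * (t/δ)^a)) (hY : V ≤ t^(-α) * δ^(-β')) :
    V ≤ c^(α/a) * δ^(-(α + β' * (1 - α/a))) := by
  set l : ℝ := α/a with hl
  have hl0 : 0 ≤ l := div_nonneg hα ha.le
  have hl1 : l ≤ 1 := (div_le_one ha).2 hαa
  have hal : a * l = α := by rw [hl, mul_comm]; exact div_mul_cancel₀ α ha.ne'
  rcases eq_or_lt_of_le hV with h0 | hVpos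
  · rw [← h0]; positivity
  have hXpos : 0 < t^(-α) * (c * (t/δ)^a) := by positivity
  have hYpos : 0 < t^(-α) * δ^(-β') := by positivity
  have h1 : V ≤ (t^(-α) * (c * (t/δ)^a))^l * (t^(-α) * δ^(-β'))^(1-l) := by
    calc V = V^l * V^(1-l) := by
          rw [← Real.rpow_add hVpos]; norm_num
      _ ≤ _ := by
          apply mul_le_mul (Real.rpow_le_rpow hV hX hl0)
            (Real.rpow_le_rpow hV hY (by linarith)) (Real.rpow_nonneg hV _)
            (Real.rpow_nonneg hXpos.le _)
  refine h1.trans (le_of_eq ?_)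
  have key : ∀ {u v : ℝ}, 0 < u → 0 < v → Real.log u = Real.log v → u = v := by
    intro u v hu hv h
    rw [← Real.exp_log hu, ← Real.exp_log hv, h]
  have hlogX : Real.log (t^(-α) * (c * (t/δ)^a))
      = -α * Real.log t + (Real.log c + a * (Real.log t - Real.log δ)) := by
    rw [Real.log_mul (by positivity) (by positivity), Real.log_mul (by positivity) (by positivity),
      Real.log_rpow ht, Real.log_rpow (by positivity), Real.log_div ht.ne' hδ.ne']
    try ring
  have hlogY : Real.log (t^(-α) * δ^(-β')) = -α * Real.log t + (-β') * Real.log δ := by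
    rw [Real.log_mul (by positivity) (by positivity), Real.log_rpow ht, Real.log_rpow hδ]
    try ring
  apply key (by positivity) (by positivity)
  have hLHS : Real.log ((t^(-α) * (c * (t/δ)^a))^l * (t^(-α) * δ^(-β'))^(1-l))
      = l * (-α * Real.log t + (Real.log c + a * (Real.log t - Real.log δ)))
        + (1-l) * (-α * Real.log t + (-β') * Real.log δ) := by
    rw [Real.log_mul (by positivity) (by positivity), Real.log_rpow hXpos, Real.log_rpow hYpos,
      hlogX, hlogY]
  have hRHS : Real.log (c^l * δ^(-(α + β'*(1-l))))
      = l * Real.log c + (-(α + β'*(1-l))) * Real.log δ := by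
    rw [Real.log_mul (by positivity) (by positivity), Real.log_rpow hc, Real.log_rpow hδ]
  rw [hLHS, hRHS]
  linear_combination (Real.log t - Real.log δ) * hal


lemma rpow_le_max_one {c l : ℝ} (hc : 0 < c) (hl0 : 0 ≤ l) (hl1 : l ≤ 1) :
    c ^ l ≤ max c 1 := by
  rcases le_total 1 c with h | h
  · calc c ^ l ≤ c ^ (1:ℝ) := Real.rpow_le_rpow_of_exponent_le h hl1
      _ = c := Real.rpow_one c
      _ ≤ max c 1 := le_max_left _ _
  · calc c ^ l ≤ 1 := Real.rpow_le_one hc.le h hl0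
      _ ≤ max c 1 := le_max_right _ _

set_option maxHeartbeats 1000000 in
lemma uniform_bound (E : Set ℝ) (hE : E ⊆ Set.Icc 1 2) (hne : E.Nonempty)
    (β γ : ℝ) (hβ : β = upperMink E) (hγpos : 0 < γ)
    (hγ : Filter.Tendsto (upperAssouadSpec E) (nhdsWithin 1 (Set.Iio 1)) (nhds γ))
    (hβ0 : 0 ≤ β) (hβγ : β ≤ γ)
    (α : ℝ) (hα : 0 ≤ α) (ε : ℝ) (hε : 0 < ε) :
    ∃ C : ℝ, 1 ≤ C ∧ ∀ᶠ δ : ℝ in nhdsWithin 0 (Set.Ioi 0), ∀ x y : ℝ,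
      1 ≤ x → x ≤ y → y ≤ 2 → δ ≤ y - x →
      (y - x)^(-α) * (coverN (E ∩ Set.Icc x y) δ : ℝ)
        ≤ C * δ^(-(max α ((1 - β/γ) * α + β) + ε)) := by
  set M : ℝ := max α ((1 - β/γ) * α + β) with hM
  have hαM : α ≤ M := le_max_left _ _
  have hM2 : (1 - β/γ) * α + β ≤ M := le_max_right _ _
  have hγε : 0 < γ + ε := by linarith
  -- choose θ
  have hev1 : ∀ᶠ θ : ℝ in nhdsWithin 1 (Set.Iio 1), upperAssouadSpec E θ < γ + ε :=
    hγ.eventually (eventually_iff.2 (by exact Iio_mem_nhds (show γ < γ + ε by linarith)))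
  have hθ0lt : max (1 - ε/(γ+ε)) (1/2) < 1 := by
    apply max_lt _ (by norm_num)
    have : 0 < ε/(γ+ε) := div_pos hε hγε
    linarith
  have hev2 : ∀ᶠ θ : ℝ in nhdsWithin 1 (Set.Iio 1),
      θ ∈ Set.Ioo (max (1 - ε/(γ+ε)) (1/2)) 1 :=
    Ioo_mem_nhdsLT_of_mem ⟨hθ0lt, le_refl 1⟩
  obtain ⟨θ, hθspec, hθmem⟩ := (hev1.and hev2).exists
  have hθ0 : 0 < θ := lt_of_lt_of_le (by norm_num) (le_trans (le_max_right _ _) hθmem.1.le)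
  have hθ1 : θ < 1 := hθmem.2
  have hθε : (γ + ε) * (1 - θ) ≤ ε := by
    have h1 : 1 - ε/(γ+ε) < θ := lt_of_le_of_lt (le_max_left _ _) hθmem.1
    have h2 : 1 - θ < ε/(γ+ε) := by linarith
    rw [lt_div_iff₀ hγε] at h2
    nlinarith
  -- choose a
  have hSne : (specSet E θ).Nonempty := ⟨2, two_mem_specSet E hE hθ0 hθ1.le⟩
  obtain ⟨a, haS, haγε⟩ := exists_lt_of_csInf_lt hSne
    (by rw [← upperAssouadSpec_eq]; exact hθspec)
  obtain ⟨ha0, c₀, hc₀, hcov⟩ := haS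
  refine ⟨max c₀ 1, le_max_right _ _, ?_⟩
  filter_upwards [mink_ev hE hne hε, ev_small 1 one_pos] with δ hmink hδmem
  intro x y hx hxy hy htδ
  obtain ⟨hδ0, hδ1⟩ := hδmem
  set t : ℝ := y - x with htdef
  have ht0 : 0 < t := lt_of_lt_of_le hδ0 htδ
  have hδθ1 : Real.rpow δ θ ≤ 1 := (rpow_theta_bounds ⟨hδ0, hδ1⟩ hθ0.le hθ1.le).2
  have hδδθ : δ ≤ Real.rpow δ θ := (rpow_theta_bounds ⟨hδ0, hδ1⟩ hθ0.le hθ1.le).1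
  have hδθpos : 0 < Real.rpow δ θ := Real.rpow_pos_of_pos hδ0 θ
  have hN0 : (0:ℝ) ≤ (coverN (E ∩ Set.Icc x y) δ : ℝ) := Nat.cast_nonneg _
  have hNE : (coverN (E ∩ Set.Icc x y) δ : ℝ) ≤ δ^(-(β+ε)) := by
    have h1 : coverN (E ∩ Set.Icc x y) δ ≤ coverN E δ :=
      coverN_mono Set.inter_subset_left (covSet_nonempty hE one_le_two hδ0)
    calc (coverN (E ∩ Set.Icc x y) δ : ℝ) ≤ (coverN E δ : ℝ) := by exact_mod_cast h1
      _ ≤ δ^(-(upperMink E + ε)) := hmink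
      _ = δ^(-(β+ε)) := by rw [hβ]
  -- generic small-interval estimate, for any valid exponent b < γ+ε
  have caseA : ∀ b : ℝ, 0 < b → b < γ + ε →
      (∀ δ' ∈ Set.Ioo (0:ℝ) 1, ∀ x' y' : ℝ, 1 ≤ x' → x' ≤ y' → y' ≤ 2 →
        Real.rpow δ' θ ≤ y' - x' →
        (coverN (E ∩ Set.Icc x' y') δ' : ℝ) ≤ c₀ * Real.rpow ((y' - x')/δ') b) →
      t ≤ Real.rpow δ θ →
      t^(-α) * (coverN (E ∩ Set.Icc x y) δ : ℝ) ≤ (max c₀ 1) * δ^(-(M + ε)) := by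
    intro b hb0 hbγε hcovb hts
    have hN : (coverN (E ∩ Set.Icc x y) δ : ℝ) ≤ c₀ * Real.rpow (Real.rpow δ θ / δ) b :=
      coverN_small_interval E hθ0 hθ1.le hcovb ⟨hδ0, hδ1⟩ hx hxy hy hts
    have hquot : Real.rpow δ θ / δ = δ ^ (θ - 1) := by
      rw [Real.rpow_sub hδ0, Real.rpow_one]
      rfl
    have hpow : Real.rpow (δ ^ (θ-1)) b = δ ^ ((θ-1)*b) := by
      rw [show Real.rpow (δ ^ (θ-1)) b = (δ ^ (θ-1)) ^ b from rfl, ← Real.rpow_mul hδ0.le]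
    have htα : t^(-α) ≤ δ^(-α) :=
      Real.rpow_le_rpow_of_nonpos hδ0 htδ (neg_nonpos.2 hα)
    have hexp : -(M + ε) ≤ -α + (θ-1)*b := by
      have h1 : (1-θ)*b ≤ (1-θ)*(γ+ε) :=
        mul_le_mul_of_nonneg_left hbγε.le (by linarith)
      have h2 : (1-θ)*(γ+ε) ≤ ε := by linarith [hθε]
      nlinarith
    calc t^(-α) * (coverN (E ∩ Set.Icc x y) δ : ℝ)
        ≤ δ^(-α) * (c₀ * δ^((θ-1)*b)) := by
          apply mul_le_mul htα (by rw [hquot, hpow] at hN; exact hN) hN0 (by positivity)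
      _ = c₀ * δ^(-α + (θ-1)*b) := by rw [Real.rpow_add hδ0]; ring
      _ ≤ (max c₀ 1) * δ^(-(M+ε)) := by
          apply mul_le_mul (le_max_left _ _)
            (Real.rpow_le_rpow_of_exponent_ge hδ0 hδ1.le hexp) (by positivity)
            (by positivity)
  rcases lt_or_ge α (γ + ε) with hαsmall | hαbig
  · -- use exponent a' = max a α
    set a' : ℝ := max a α with ha'
    have ha'0 : 0 < a' := lt_of_lt_of_le ha0 (le_max_left _ _)
    have ha'γε : a' < γ + ε := max_lt haγε hαsmall
    have hαa' : α ≤ a' := le_max_right _ _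
    have hcov' : ∀ δ' ∈ Set.Ioo (0:ℝ) 1, ∀ x' y' : ℝ, 1 ≤ x' → x' ≤ y' → y' ≤ 2 →
        Real.rpow δ' θ ≤ y' - x' →
        (coverN (E ∩ Set.Icc x' y') δ' : ℝ) ≤ c₀ * Real.rpow ((y' - x')/δ') a' := by
      intro δ' hδ' x' y' h1 h2 h3 h4
      refine (hcov δ' hδ' x' y' h1 h2 h3 h4).trans ?_
      exact mul_le_mul_of_nonneg_left
        (Real.rpow_le_rpow_of_exponent_le (ratio_ge_one hδ' hθ0.le hθ1.le h4) (le_max_left _ _))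
        hc₀.le
    rcases le_or_gt t (Real.rpow δ θ) with hts | hts
    · exact caseA a' ha'0 ha'γε hcov' hts
    · -- interpolation
      have hX : t^(-α) * (coverN (E ∩ Set.Icc x y) δ : ℝ) ≤ t^(-α) * (c₀ * (t/δ)^a') := by
        apply mul_le_mul_of_nonneg_left _ (by positivity)
        exact hcov' δ ⟨hδ0, hδ1⟩ x y hx hxy hy hts.le
      have hY : t^(-α) * (coverN (E ∩ Set.Icc x y) δ : ℝ) ≤ t^(-α) * δ^(-(β+ε)) :=
        mul_le_mul_of_nonneg_left hNE (by positivity)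
      have hint := interpolation ht0 hδ0 hc₀ ha'0 hα hαa' (by positivity) hX hY
      refine hint.trans ?_
      apply mul_le_mul (rpow_le_max_one hc₀ (div_nonneg hα ha'0.le) ((div_le_one ha'0).2 hαa'))
        _ (by positivity) (by positivity)
      apply Real.rpow_le_rpow_of_exponent_ge hδ0 hδ1.le
      -- -(M+ε) ≤ -(α + (β+ε)*(1-α/a'))
      have hkey : (β+ε) * (1 - α/a') ≤ (1 - β/γ) * α + β + ε - α := by
        have h1a : β * a' ≤ β * (γ+ε) := mul_le_mul_of_nonneg_left ha'γε.le hβ0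
        have h1b : β * ε ≤ γ * ε := mul_le_mul_of_nonneg_right hβγ hε.le
        have h1 : β * a' ≤ γ * (β + ε) := by nlinarith [h1a, h1b]
        have h2 : α * (β/γ) ≤ α * ((β+ε)/a') := by
          apply mul_le_mul_of_nonneg_left _ hα
          rw [div_le_div_iff₀ hγpos ha'0]
          nlinarith [h1]
        have h3 : (β+ε)*(α/a') = α*((β+ε)/a') := by ring
        have h4 : (1 - β/γ) * α = α - α*(β/γ) := by ring
        nlinarith
      have : α + (β+ε)*(1-α/a') ≤ M + ε := by
        calc α + (β+ε)*(1-α/a') ≤ α + ((1 - β/γ) * α + β + ε - α) := by linarith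
          _ = (1 - β/γ) * α + β + ε := by ring
          _ ≤ M + ε := by linarith
      linarith
  · -- α ≥ γ + ε > a
    have haα : a < α := lt_of_lt_of_le haγε hαbig
    rcases le_or_gt t (Real.rpow δ θ) with hts | hts
    · exact caseA a ha0 haγε hcov hts
    · have hN : (coverN (E ∩ Set.Icc x y) δ : ℝ) ≤ c₀ * (t/δ)^a :=
        hcov δ ⟨hδ0, hδ1⟩ x y hx hxy hy hts.le
      have hdiv : (t/δ)^a = t^a * δ^(-a) := by
        rw [div_eq_mul_inv, Real.mul_rpow ht0.le (by positivity), ← Real.rpow_neg_one δ,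
          ← Real.rpow_mul hδ0.le]
        norm_num
      have htpow : t^(a-α) ≤ (Real.rpow δ θ)^(a-α) :=
        Real.rpow_le_rpow_of_nonpos hδθpos hts.le (by linarith)
      have hθpow : (Real.rpow δ θ)^(a-α) = δ^(θ*(a-α)) := by
        rw [show Real.rpow δ θ = δ ^ θ from rfl, ← Real.rpow_mul hδ0.le]
      have hexp : -(M+ε) ≤ θ*(a-α) - a := by
        have h1 : (1-θ)*a ≤ (1-θ)*(γ+ε) := mul_le_mul_of_nonneg_left haγε.le (by linarith)
        have h2 : (1-θ)*(γ+ε) ≤ ε := by linarith [hθε]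
        have h3 : θ*α ≤ α := by nlinarith
        nlinarith
      calc t^(-α) * (coverN (E ∩ Set.Icc x y) δ : ℝ)
          ≤ t^(-α) * (c₀ * (t^a * δ^(-a))) := by
            apply mul_le_mul_of_nonneg_left _ (by positivity)
            rw [hdiv] at hN; exact hN
        _ = c₀ * (t^(a-α) * δ^(-a)) := by
            rw [show t^(-α) * (c₀ * (t^a * δ^(-a))) = c₀ * ((t^(-α) * t^a) * δ^(-a)) by ring,
              ← Real.rpow_add ht0]
            ring_nf
        _ ≤ c₀ * (δ^(θ*(a-α)) * δ^(-a)) := by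
            apply mul_le_mul_of_nonneg_left _ hc₀.le
            apply mul_le_mul_of_nonneg_right _ (by positivity)
            rw [← hθpow]; exact htpow
        _ = c₀ * δ^(θ*(a-α) - a) := by rw [← Real.rpow_add hδ0]; ring_nf
        _ ≤ (max c₀ 1) * δ^(-(M+ε)) := by
            apply mul_le_mul (le_max_left _ _)
              (Real.rpow_le_rpow_of_exponent_ge hδ0 hδ1.le hexp) (by positivity) (by positivity)

lemma beta_nonneg {E : Set ℝ} (hE : E ⊆ Set.Icc 1 2) (hne : E.Nonempty) :
    0 ≤ upperMink E :=
  Filter.le_limsup_of_frequently_le ((g_nonneg_ev hE hne).frequently) (mink_bounded hE hne)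

lemma beta_le_spec {E : Set ℝ} (hE : E ⊆ Set.Icc 1 2) (hne : E.Nonempty) {θ : ℝ}
    (hθ0 : 0 < θ) (hθ1 : θ ≤ 1) : upperMink E ≤ upperAssouadSpec E θ := by
  rw [upperAssouadSpec_eq]
  refine le_csInf ⟨2, two_mem_specSet E hE hθ0 hθ1⟩ ?_
  rintro a ⟨ha0, c, hc0, hcov⟩
  refine le_of_forall_pos_le_add ?_
  intro ε hε
  have hup : upperMink E = Filter.limsup
      (fun δ : ℝ => Real.log (coverN E δ) / Real.log (1/δ)) (nhdsWithin 0 (Set.Ioi 0)) := rfl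
  rw [hup]
  apply Filter.limsup_le_of_le (Filter.isCoboundedUnder_le_of_eventually_le _ (g_nonneg_ev hE hne))
  filter_upwards [ev_small 1 one_pos, ev_log_div_le (c := c) ε hε] with δ hδ hlogc
  obtain ⟨hδ0, hδ1⟩ := hδ
  have hL : (0:ℝ) < Real.log (1/δ) := Real.log_pos (by rw [lt_div_iff₀ hδ0]; linarith)
  have happ := hcov δ ⟨hδ0, hδ1⟩ 1 2 le_rfl one_le_two le_rfl
    (by rw [show (2:ℝ) - 1 = 1 by norm_num]
        exact (rpow_theta_bounds ⟨hδ0, hδ1⟩ hθ0.le hθ1).2)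
  rw [Set.inter_eq_left.2 hE, show ((2:ℝ) - 1)/δ = 1/δ by norm_num] at happ
  have hpos : (0:ℝ) < (coverN E δ : ℝ) := by
    exact_mod_cast one_le_coverN hne (covSet_nonempty hE one_le_two hδ0)
  have hlog : Real.log (coverN E δ) ≤ Real.log c + a * Real.log (1/δ) := by
    calc Real.log (coverN E δ) ≤ Real.log (c * Real.rpow (1/δ) a) := Real.log_le_log hpos happ
      _ = Real.log c + a * Real.log (1/δ) := by
          rw [show Real.rpow (1/δ) a = (1/δ) ^ a from rfl,
            Real.log_mul hc0.ne' (by positivity), Real.log_rpow (by positivity)]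
  rw [div_le_iff₀ hL]
  have := (div_le_iff₀ hL).1 hlogc
  linarith

lemma beta_le_gamma {E : Set ℝ} (hE : E ⊆ Set.Icc 1 2) (hne : E.Nonempty) {γ : ℝ}
    (hγ : Filter.Tendsto (upperAssouadSpec E) (nhdsWithin 1 (Set.Iio 1)) (nhds γ)) :
    upperMink E ≤ γ := by
  refine ge_of_tendsto hγ ?_
  filter_upwards [Ioo_mem_nhdsLT_of_mem (Set.mem_Ioc.2 ⟨zero_lt_one, le_rfl⟩)] with θ hθ
  exact beta_le_spec hE hne hθ.1 hθ.2.le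

/-- The set appearing in the definition of `nuSharp`. -/
def vSet (E : Set ℝ) (α δ : ℝ) : Set ℝ :=
  {v : ℝ | ∃ a b : ℝ, 1 ≤ a ∧ a ≤ b ∧ b ≤ 2 ∧ δ ≤ b - a ∧
      v = Real.rpow (b - a) (-α) * (coverN (E ∩ Set.Icc a b) δ : ℝ)}

lemma nuSharp_eq (E : Set ℝ) (α : ℝ) : nuSharp E α =
    Filter.limsup (fun δ : ℝ => Real.log (sSup (vSet E α δ)) / Real.log (1/δ))
      (nhdsWithin 0 (Set.Ioi 0)) := rfl

lemma vSet_nonempty (E : Set ℝ) (α : ℝ) {δ : ℝ} (hδ1 : δ ≤ 1) :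
    (vSet E α δ).Nonempty :=
  ⟨_, 1, 2, le_rfl, one_le_two, le_rfl, by linarith, rfl⟩

/-- The witness giving the lower bound `δ^(-α)` for `sSup (vSet E α δ)`. -/
lemma vSet_witness {E : Set ℝ} (hE : E ⊆ Set.Icc 1 2) (hne : E.Nonempty) (α : ℝ) {δ : ℝ}
    (hδ0 : 0 < δ) (hδ1 : δ < 1) :
    ∃ v ∈ vSet E α δ, δ^(-α) ≤ v := by
  obtain ⟨e, he⟩ := hne
  obtain ⟨he1, he2⟩ := hE he
  set p : ℝ := min e (2 - δ) with hp
  have hp1 : 1 ≤ p := le_min he1 (by linarith)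
  have hpq : p ≤ p + δ := by linarith
  have hq2 : p + δ ≤ 2 := by
    rcases le_or_gt e (2 - δ) with h | h
    · have : p = e := min_eq_left h
      rw [this]; linarith
    · have : p = 2 - δ := min_eq_right h.le
      rw [this]; linarith
  have hep : e ∈ Set.Icc p (p + δ) := by
    constructor
    · exact min_le_left _ _
    · rcases le_or_gt e (2 - δ) with h | h
      · have : p = e := min_eq_left h
        rw [this]; linarith
      · have : p = 2 - δ := min_eq_right h.le
        rw [this]; linarith
  refine ⟨_, ⟨p, p + δ, hp1, hpq, hq2, by linarith, rfl⟩, ?_⟩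
  have hlen : p + δ - p = δ := by ring
  have hN1 : 1 ≤ coverN (E ∩ Set.Icc p (p + δ)) δ :=
    one_le_coverN ⟨e, he, hep⟩
      (covSet_nonempty Set.inter_subset_right hpq hδ0)
  calc δ^(-α) = δ^(-α) * 1 := by ring
    _ ≤ Real.rpow (p + δ - p) (-α) * (coverN (E ∩ Set.Icc p (p + δ)) δ : ℝ) := by
        rw [hlen]
        apply mul_le_mul_of_nonneg_left _ (by positivity)
        exact_mod_cast hN1

theorem nuSharp_le_max (E : Set ℝ) (hE : E ⊆ Set.Icc 1 2) (hne : E.Nonempty)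
    (β γ : ℝ) (hβ : β = upperMink E) (hγpos : 0 < γ)
    (hγ : Filter.Tendsto (upperAssouadSpec E) (nhdsWithin 1 (Set.Iio 1)) (nhds γ)) :
    ∀ α : ℝ, 0 ≤ α →
      nuSharp E α ≤ max α ((1 - β/γ) * α + β) ∧ (γ ≤ α → nuSharp E α = α) := by
  have hβ0 : 0 ≤ β := hβ ▸ beta_nonneg hE hne
  have hβγ : β ≤ γ := hβ ▸ beta_le_gamma hE hne hγ
  intro α hα
  set M : ℝ := max α ((1 - β/γ) * α + β) with hMdef
  have hαM : α ≤ M := le_max_left _ _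
  have hub : ∀ ε : ℝ, 0 < ε → ∀ᶠ δ : ℝ in nhdsWithin 0 (Set.Ioi 0),
      Real.log (sSup (vSet E α δ)) / Real.log (1/δ) ≤ M + 2*ε ∧
      α ≤ Real.log (sSup (vSet E α δ)) / Real.log (1/δ) := by
    intro ε hε
    obtain ⟨C, hC1, hCev⟩ := uniform_bound E hE hne β γ hβ hγpos hγ hβ0 hβγ α hα ε hε
    filter_upwards [hCev, ev_small 1 one_pos, ev_log_div_le (c := C) ε hε] with δ hCδ hδ hlogC
    obtain ⟨hδ0, hδ1⟩ := hδ
    have hL : (0:ℝ) < Real.log (1/δ) := Real.log_pos (by rw [lt_div_iff₀ hδ0]; linarith)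
    have hSle : sSup (vSet E α δ) ≤ C * δ^(-(M+ε)) := by
      apply csSup_le (vSet_nonempty E α hδ1.le)
      rintro v ⟨x, y, hx, hxy, hy, hlen, rfl⟩
      exact hCδ x y hx hxy hy hlen
    have hbdd : BddAbove (vSet E α δ) := by
      refine ⟨C * δ^(-(M+ε)), fun v hv => ?_⟩
      obtain ⟨x, y, hx, hxy, hy, hlen, rfl⟩ := hv
      exact hCδ x y hx hxy hy hlen
    obtain ⟨v₀, hv₀mem, hv₀⟩ := vSet_witness hE hne α hδ0 hδ1
    have hSge : δ^(-α) ≤ sSup (vSet E α δ) := le_trans hv₀ (le_csSup hbdd hv₀mem)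
    have hSpos : 0 < sSup (vSet E α δ) := lt_of_lt_of_le (by positivity) hSge
    constructor
    · have hlog : Real.log (sSup (vSet E α δ)) ≤ Real.log C + (M+ε) * Real.log (1/δ) := by
        calc Real.log (sSup (vSet E α δ)) ≤ Real.log (C * δ^(-(M+ε))) :=
              Real.log_le_log hSpos hSle
          _ = Real.log C + (-(M+ε)) * Real.log δ := by
              rw [Real.log_mul (by positivity) (by positivity), Real.log_rpow hδ0]
          _ = Real.log C + (M+ε) * Real.log (1/δ) := by
              rw [one_div, Real.log_inv]; ring
      rw [div_le_iff₀ hL]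
      have h2 := (div_le_iff₀ hL).1 hlogC
      linarith
    · rw [le_div_iff₀ hL]
      calc α * Real.log (1/δ) = Real.log (δ^(-α)) := by
            rw [Real.log_rpow hδ0, one_div, Real.log_inv]; ring
        _ ≤ Real.log (sSup (vSet E α δ)) := Real.log_le_log (by positivity) hSge
  have hbound : Filter.IsBoundedUnder (· ≤ ·) (nhdsWithin (0:ℝ) (Set.Ioi 0))
      (fun δ : ℝ => Real.log (sSup (vSet E α δ)) / Real.log (1/δ)) :=
    ⟨M + 2*1, Filter.eventually_map.2 ((hub 1 one_pos).mono (fun δ h => h.1))⟩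
  have hlow : α ≤ nuSharp E α := by
    rw [nuSharp_eq]
    exact Filter.le_limsup_of_frequently_le
      (((hub 1 one_pos).mono (fun δ h => h.2)).frequently) hbound
  have hupper : nuSharp E α ≤ M := by
    refine le_of_forall_pos_le_add (fun ε hε => ?_)
    rw [nuSharp_eq]
    refine Filter.limsup_le_of_le
      (Filter.isCoboundedUnder_le_of_eventually_le _ (x := α)
        ((hub (ε/2) (half_pos hε)).mono fun δ h => h.2))
      (((hub (ε/2) (half_pos hε)).mono fun δ h => ?_))
    have h1 := h.1
    linarith
  refine ⟨hupper, fun hγα => ?_⟩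
  have hmax : M = α := by
    apply max_eq_left
    have h1 : (β/γ)*γ = β := by field_simp
    have h2 : (β/γ)*γ ≤ (β/γ)*α := mul_le_mul_of_nonneg_left hγα (div_nonneg hβ0 hγpos.le)
    have h3 : (1 - β/γ)*α = α - (β/γ)*α := by ring
    linarith
  exact le_antisymm (hupper.trans_eq hmax) hlow
end
end

section
/- Let E ⊆ [1,2] satisfy sup_{|J|=δ^θ} N(E∩J,δ) ≈ δ^{−min((1−θ)γ, β)} uniformly in δ∈(0,1), θ∈[0,1], where 0 ≤ β ≤ γ ≤ 1, γ > 0. Then for all α ≥ 0, ν♯(α) = max(α, (1−β/γ)α + β). -/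
open MeasureTheory Filter Set

noncomputable section

/-- `sup_{|J| = δ^θ} N(E ∩ J, δ)`, the supremum over subintervals `J ⊆ [1,2]` of
length exactly `δ^θ` of the covering numbers `N(E ∩ J, δ)`. -/
def supCoverExact (E : Set ℝ) (δ θ : ℝ) : ℝ :=
  sSup {v : ℝ | ∃ a b : ℝ, 1 ≤ a ∧ a ≤ b ∧ b ≤ 2 ∧ b - a = Real.rpow δ θ ∧
    v = (coverN (E ∩ Set.Icc a b) δ : ℝ)}

/- ==================== auxiliary material ==================== -/

lemma coverN_le_of_cover {A : Set ℝ} {δ : ℝ} {n : ℕ} (c : Fin n → ℝ)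
    (h : A ⊆ ⋃ i, Set.Icc (c i) (c i + δ)) : coverN A δ ≤ n :=
  Nat.sInf_le ⟨c, h⟩

lemma coverN_le_of_subset_Icc {A : Set ℝ} (hA : A ⊆ Set.Icc 1 2) {δ : ℝ} (hδ : 0 < δ) :
    coverN A δ ≤ ⌈1/δ⌉₊ + 1 := by
  apply coverN_le_of_cover (fun i : Fin (⌈1/δ⌉₊ + 1) => 1 + (i : ℝ) * δ)
  intro x hx
  obtain ⟨h1, h2⟩ := hA hx
  have hx0 : 0 ≤ (x - 1)/δ := div_nonneg (by linarith) hδ.le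
  have hfl : (⌊(x-1)/δ⌋₊ : ℝ) ≤ (x-1)/δ := Nat.floor_le hx0
  have hfl2 : (x-1)/δ < ⌊(x-1)/δ⌋₊ + 1 := Nat.lt_floor_add_one _
  have hle : (x-1)/δ ≤ 1/δ := by gcongr; linarith
  have hik : ⌊(x-1)/δ⌋₊ < ⌈1/δ⌉₊ + 1 := by
    have h3 : ⌊(x-1)/δ⌋₊ ≤ ⌊1/δ⌋₊ := Nat.floor_le_floor hle
    have h4 : ⌊1/δ⌋₊ ≤ ⌈1/δ⌉₊ := Nat.floor_le_ceil _
    omega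
  refine Set.mem_iUnion.2 ⟨⟨⌊(x-1)/δ⌋₊, hik⟩, ?_, ?_⟩
  · have : (⌊(x-1)/δ⌋₊ : ℝ) * δ ≤ x - 1 := by
      rw [← le_div_iff₀ hδ]; exact hfl
    simpa using by linarith
  · have : x - 1 < ((⌊(x-1)/δ⌋₊ : ℝ) + 1) * δ := by
      rw [← div_lt_iff₀ hδ]; exact hfl2
    simpa using by nlinarith

/-- The function whose limsup defines `nuSharp`. -/
def Sfun (E : Set ℝ) (α δ : ℝ) : ℝ :=
  sSup {v : ℝ | ∃ a b : ℝ, 1 ≤ a ∧ a ≤ b ∧ b ≤ 2 ∧ δ ≤ b - a ∧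
      v = (b - a) ^ (-α) * (coverN (E ∩ Set.Icc a b) δ : ℝ)}

lemma nuSharp_eq_limsup (E : Set ℝ) (α : ℝ) :
    nuSharp E α = Filter.limsup (fun δ : ℝ => Real.log (Sfun E α δ) / Real.log (1/δ))
      (nhdsWithin 0 (Set.Ioi 0)) := rfl

lemma supCoverExact_eq (E : Set ℝ) (δ θ : ℝ) :
    supCoverExact E δ θ = sSup {v : ℝ | ∃ a b : ℝ, 1 ≤ a ∧ a ≤ b ∧ b ≤ 2 ∧ b - a = δ ^ θ ∧
      v = (coverN (E ∩ Set.Icc a b) δ : ℝ)} := rfl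

theorem nuSharp_eq_max_of_assouad_regular (E : Set ℝ) (hE : E ⊆ Set.Icc 1 2)
    (β γ : ℝ) (hβ : 0 ≤ β) (hβγ : β ≤ γ) (hγ : γ ≤ 1) (hγ0 : 0 < γ)
    (C : ℝ) (hC : 1 ≤ C)
    (hcomp : ∀ δ ∈ Set.Ioo (0:ℝ) 1, ∀ θ ∈ Set.Icc (0:ℝ) 1,
      C⁻¹ * Real.rpow δ (-(min ((1 - θ) * γ) β)) ≤ supCoverExact E δ θ ∧
      supCoverExact E δ θ ≤ C * Real.rpow δ (-(min ((1 - θ) * γ) β))) :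
    ∀ α : ℝ, 0 ≤ α → nuSharp E α = max α ((1 - β/γ) * α + β) := by
  intro α hα
  simp only [Real.rpow_eq_pow, supCoverExact_eq] at hcomp
  have hC0 : (0:ℝ) < C := one_pos.trans_le hC
  have hγne : γ ≠ 0 := ne_of_gt hγ0
  set f : ℝ := max α ((1 - β/γ) * α + β) with hfdef
  -- Main two-sided estimate
  have main : ∀ δ ∈ Set.Ioo (0:ℝ) 1,
      C⁻¹ * δ ^ (-f) ≤ Sfun E α δ ∧ Sfun E α δ ≤ C * δ ^ (-f) := by
    intro δ hδIoo
    obtain ⟨hδ0, hδ1⟩ := hδIoo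
    have hNb : ∀ a b : ℝ, (coverN (E ∩ Set.Icc a b) δ : ℝ) ≤ ((⌈1/δ⌉₊ + 1 : ℕ) : ℝ) := by
      intro a b
      exact_mod_cast
        coverN_le_of_subset_Icc (fun x (hx : x ∈ E ∩ Set.Icc a b) => hE hx.1) hδ0
    -- the set defining Sfun is bounded above
    have hSbdd : BddAbove {v : ℝ | ∃ a b : ℝ, 1 ≤ a ∧ a ≤ b ∧ b ≤ 2 ∧ δ ≤ b - a ∧
        v = (b - a) ^ (-α) * (coverN (E ∩ Set.Icc a b) δ : ℝ)} := by
      refine ⟨δ ^ (-α) * ((⌈1/δ⌉₊ + 1 : ℕ) : ℝ), ?_⟩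
      rintro v ⟨a, b, ha, hab, hb, hba, rfl⟩
      have h1 : (b - a) ^ (-α) ≤ δ ^ (-α) :=
        Real.rpow_le_rpow_of_nonpos hδ0 hba (neg_nonpos.2 hα)
      exact mul_le_mul h1 (hNb a b) (Nat.cast_nonneg _) (Real.rpow_nonneg hδ0.le _)
    have hSne : Set.Nonempty {v : ℝ | ∃ a b : ℝ, 1 ≤ a ∧ a ≤ b ∧ b ≤ 2 ∧ δ ≤ b - a ∧
        v = (b - a) ^ (-α) * (coverN (E ∩ Set.Icc a b) δ : ℝ)} :=
      ⟨_, 1, 1 + δ, le_rfl, by linarith, by linarith, by linarith, rfl⟩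
    -- lower bound for every admissible θ
    have claimθ : ∀ θ ∈ Set.Icc (0:ℝ) 1,
        C⁻¹ * δ ^ (-(θ * α + min ((1 - θ) * γ) β)) ≤ Sfun E α δ := by
      intro θ hθ
      obtain ⟨hθ0, hθ1⟩ := hθ
      have hδθpos : 0 < δ ^ θ := Real.rpow_pos_of_pos hδ0 θ
      have hδθle : δ ^ θ ≤ 1 := Real.rpow_le_one hδ0.le hδ1.le hθ0
      have hδleδθ : δ ≤ δ ^ θ := by
        calc δ = δ ^ (1:ℝ) := (Real.rpow_one δ).symm
          _ ≤ δ ^ θ := Real.rpow_le_rpow_of_exponent_ge hδ0 hδ1.le hθ1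
      have hTne : Set.Nonempty {v : ℝ | ∃ a b : ℝ, 1 ≤ a ∧ a ≤ b ∧ b ≤ 2 ∧
          b - a = δ ^ θ ∧ v = (coverN (E ∩ Set.Icc a b) δ : ℝ)} :=
        ⟨_, 1, 1 + δ ^ θ, le_rfl, by linarith, by linarith, by ring, rfl⟩
      have hTle : ∀ w ∈ {v : ℝ | ∃ a b : ℝ, 1 ≤ a ∧ a ≤ b ∧ b ≤ 2 ∧
          b - a = δ ^ θ ∧ v = (coverN (E ∩ Set.Icc a b) δ : ℝ)},
          w ≤ δ ^ (θ * α) * Sfun E α δ := by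
        rintro w ⟨a, b, ha, hab, hb, hba, rfl⟩
        have hmem : (b - a) ^ (-α) * (coverN (E ∩ Set.Icc a b) δ : ℝ) ∈
            {v : ℝ | ∃ a b : ℝ, 1 ≤ a ∧ a ≤ b ∧ b ≤ 2 ∧ δ ≤ b - a ∧
              v = (b - a) ^ (-α) * (coverN (E ∩ Set.Icc a b) δ : ℝ)} :=
          ⟨a, b, ha, hab, hb, by rw [hba]; exact hδleδθ, rfl⟩
        have h1 : (b - a) ^ (-α) * (coverN (E ∩ Set.Icc a b) δ : ℝ) ≤ Sfun E α δ :=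
          le_csSup hSbdd hmem
        have h2 : (b - a) ^ (-α) = δ ^ (θ * (-α)) := by
          rw [Real.rpow_mul hδ0.le, hba]
        rw [h2] at h1
        calc (coverN (E ∩ Set.Icc a b) δ : ℝ)
            = δ ^ (θ * α) * (δ ^ (θ * (-α)) * (coverN (E ∩ Set.Icc a b) δ : ℝ)) := by
              rw [← mul_assoc, ← Real.rpow_add hδ0]
              norm_num
          _ ≤ δ ^ (θ * α) * Sfun E α δ :=
              mul_le_mul_of_nonneg_left h1 (Real.rpow_nonneg hδ0.le _)
      have hsup : sSup {v : ℝ | ∃ a b : ℝ, 1 ≤ a ∧ a ≤ b ∧ b ≤ 2 ∧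
          b - a = δ ^ θ ∧ v = (coverN (E ∩ Set.Icc a b) δ : ℝ)} ≤ δ ^ (θ * α) * Sfun E α δ :=
        csSup_le hTne hTle
      have hlow := (hcomp δ ⟨hδ0, hδ1⟩ θ ⟨hθ0, hθ1⟩).1
      have hkey := le_trans hlow hsup
      have hpos : (0:ℝ) ≤ δ ^ (-(θ * α)) := Real.rpow_nonneg hδ0.le _
      calc C⁻¹ * δ ^ (-(θ * α + min ((1 - θ) * γ) β))
          = δ ^ (-(θ * α)) * (C⁻¹ * δ ^ (-(min ((1 - θ) * γ) β))) := by
            rw [show -(θ * α + min ((1 - θ) * γ) β)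
                = -(θ * α) + -(min ((1 - θ) * γ) β) by ring, Real.rpow_add hδ0]
            ring
        _ ≤ δ ^ (-(θ * α)) * (δ ^ (θ * α) * Sfun E α δ) :=
            mul_le_mul_of_nonneg_left hkey hpos
        _ = Sfun E α δ := by
            rw [← mul_assoc, ← Real.rpow_add hδ0]
            norm_num
    constructor
    · -- lower bound: choose the optimal θ
      rcases max_cases α ((1 - β/γ) * α + β) with ⟨hmax, _⟩ | ⟨hmax, _⟩
      · have h := claimθ 1 ⟨zero_le_one, le_rfl⟩
        have he : 1 * α + min ((1 - 1) * γ) β = α := by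
          rw [show ((1:ℝ) - 1) * γ = 0 by ring, min_eq_left hβ]; ring
        rw [he] at h
        rw [hfdef, hmax]
        exact h
      · have hθmem : (1 - β/γ) ∈ Set.Icc (0:ℝ) 1 := by
          constructor
          · have : β/γ ≤ 1 := (div_le_one hγ0).2 hβγ
            linarith
          · have : 0 ≤ β/γ := div_nonneg hβ hγ0.le
            linarith
        have h := claimθ (1 - β/γ) hθmem
        have he : (1 - β/γ) * α + min ((1 - (1 - β/γ)) * γ) β = (1 - β/γ) * α + β := by
          rw [show (1 - (1 - β/γ)) * γ = β by field_simp; ring, min_self]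
        rw [he] at h
        rw [hfdef, hmax]
        exact h
    · -- upper bound
      apply csSup_le hSne
      rintro v ⟨a, b, ha, hab, hb, hba, rfl⟩
      have hba0 : 0 < b - a := lt_of_lt_of_le hδ0 hba
      have hba1 : b - a ≤ 1 := by linarith
      have hlogδ : Real.log δ < 0 := Real.log_neg hδ0 hδ1
      set θ : ℝ := Real.log (b - a) / Real.log δ with hθdef
      have hθ0 : 0 ≤ θ := by
        rw [hθdef, div_nonneg_iff]
        right
        exact ⟨Real.log_nonpos hba0.le hba1, hlogδ.le⟩
      have hθ1 : θ ≤ 1 := by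
        rw [hθdef, div_le_iff_of_neg hlogδ, one_mul]
        exact Real.log_le_log hδ0 hba
      have hδθ : δ ^ θ = b - a := by
        rw [Real.rpow_def_of_pos hδ0, hθdef, mul_comm,
          div_mul_cancel₀ _ (ne_of_lt hlogδ), Real.exp_log hba0]
      have hTbdd : BddAbove {v : ℝ | ∃ a b : ℝ, 1 ≤ a ∧ a ≤ b ∧ b ≤ 2 ∧
          b - a = δ ^ θ ∧ v = (coverN (E ∩ Set.Icc a b) δ : ℝ)} := by
        refine ⟨((⌈1/δ⌉₊ + 1 : ℕ) : ℝ), ?_⟩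
        rintro w ⟨a', b', _, _, _, _, rfl⟩
        exact hNb a' b'
      have hNle : (coverN (E ∩ Set.Icc a b) δ : ℝ) ≤ sSup {v : ℝ | ∃ a b : ℝ,
          1 ≤ a ∧ a ≤ b ∧ b ≤ 2 ∧ b - a = δ ^ θ ∧
          v = (coverN (E ∩ Set.Icc a b) δ : ℝ)} :=
        le_csSup hTbdd ⟨a, b, ha, hab, hb, hδθ.symm, rfl⟩
      have hup := (hcomp δ ⟨hδ0, hδ1⟩ θ ⟨hθ0, hθ1⟩).2
      have hexp : (b - a) ^ (-α) = δ ^ (θ * (-α)) := by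
        rw [Real.rpow_mul hδ0.le, hδθ]
      -- the pointwise exponent is at most f
      have hgf : θ * α + min ((1 - θ) * γ) β ≤ f := by
        rcases le_total θ (1 - β/γ) with h | h
        · have h1 : θ * α + min ((1 - θ) * γ) β ≤ θ * α + β := by
            have := min_le_right ((1 - θ) * γ) β; linarith
          have h2 : θ * α + β ≤ (1 - β/γ) * α + β := by
            nlinarith [mul_nonneg (sub_nonneg.2 h) hα]
          exact le_trans (le_trans h1 h2) (le_max_right _ _)
        · have hmle : (1 - θ) * γ ≤ β := by
            have h1 : 1 - θ ≤ β/γ := by linarith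
            have h2 : (1 - θ) * γ ≤ (β/γ) * γ := mul_le_mul_of_nonneg_right h1 hγ0.le
            rw [div_mul_cancel₀ β hγne] at h2
            exact h2
          rw [min_eq_left hmle]
          have hbg : (β/γ) * γ = β := div_mul_cancel₀ β hγne
          rcases le_total α γ with hαγ | hαγ
          · have : θ * α + (1 - θ) * γ ≤ (1 - β/γ) * α + β := by
              nlinarith [mul_nonneg (sub_nonneg.2 h) (sub_nonneg.2 hαγ)]
            exact le_trans this (le_max_right _ _)
          · have : θ * α + (1 - θ) * γ ≤ α := by
              nlinarith [mul_nonneg (sub_nonneg.2 hθ1) (sub_nonneg.2 hαγ)]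
            exact le_trans this (le_max_left _ _)
      calc (b - a) ^ (-α) * (coverN (E ∩ Set.Icc a b) δ : ℝ)
          ≤ δ ^ (θ * (-α)) * (C * δ ^ (-(min ((1 - θ) * γ) β))) := by
            rw [hexp]
            exact mul_le_mul_of_nonneg_left (le_trans hNle hup) (Real.rpow_nonneg hδ0.le _)
        _ = C * δ ^ (θ * (-α) + -(min ((1 - θ) * γ) β)) := by
            rw [Real.rpow_add hδ0]; ring
        _ ≤ C * δ ^ (-f) := by
            apply mul_le_mul_of_nonneg_left _ hC0.le
            apply Real.rpow_le_rpow_of_exponent_ge hδ0 hδ1.le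
            linarith
  -- Now the limit computation
  have hmemIoo : Set.Ioo (0:ℝ) 1 ∈ nhdsWithin (0:ℝ) (Set.Ioi 0) :=
    Ioo_mem_nhdsGT_of_mem ⟨le_rfl, one_pos⟩
  have hlogtop : Tendsto (fun δ : ℝ => Real.log (1/δ)) (nhdsWithin 0 (Set.Ioi 0)) atTop := by
    have h1 : Tendsto (fun δ : ℝ => 1/δ) (nhdsWithin (0:ℝ) (Set.Ioi 0)) atTop := by
      simpa [one_div] using tendsto_inv_nhdsGT_zero (𝕜 := ℝ)
    exact Real.tendsto_log_atTop.comp h1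
  have hquot : Tendsto (fun δ : ℝ => Real.log C / Real.log (1/δ))
      (nhdsWithin 0 (Set.Ioi 0)) (nhds 0) :=
    Tendsto.div_atTop tendsto_const_nhds hlogtop
  have hlo : Tendsto (fun δ : ℝ => f - Real.log C / Real.log (1/δ))
      (nhdsWithin (0:ℝ) (Set.Ioi 0)) (nhds f) := by
    simpa using tendsto_const_nhds.sub hquot
  have hhi : Tendsto (fun δ : ℝ => f + Real.log C / Real.log (1/δ))
      (nhdsWithin (0:ℝ) (Set.Ioi 0)) (nhds f) := by
    simpa using tendsto_const_nhds.add hquot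
  have hbounds : ∀ᶠ δ in nhdsWithin (0:ℝ) (Set.Ioi 0),
      (f - Real.log C / Real.log (1/δ) ≤ Real.log (Sfun E α δ) / Real.log (1/δ) ∧
       Real.log (Sfun E α δ) / Real.log (1/δ) ≤ f + Real.log C / Real.log (1/δ)) := by
    refine eventually_of_mem hmemIoo ?_
    intro δ hδIoo
    obtain ⟨hδ0, hδ1⟩ := hδIoo
    obtain ⟨hl, hu⟩ := main δ ⟨hδ0, hδ1⟩
    have hL : 0 < Real.log (1/δ) := Real.log_pos (by rw [one_div]; exact (one_lt_inv₀ hδ0).2 hδ1)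
    have hLδ : Real.log (1/δ) = -Real.log δ := by rw [one_div, Real.log_inv]
    have hrf : (0:ℝ) < δ ^ (-f) := Real.rpow_pos_of_pos hδ0 _
    have hS0 : 0 < Sfun E α δ := lt_of_lt_of_le (by positivity) hl
    have hlogl : Real.log (C⁻¹ * δ ^ (-f)) = -Real.log C + (-f) * Real.log δ := by
      rw [Real.log_mul (by positivity) (by positivity), Real.log_inv, Real.log_rpow hδ0]
    have hlogu : Real.log (C * δ ^ (-f)) = Real.log C + (-f) * Real.log δ := by
      rw [Real.log_mul (by positivity) (by positivity), Real.log_rpow hδ0]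
    have hlogSl : f * Real.log (1/δ) - Real.log C ≤ Real.log (Sfun E α δ) := by
      have := Real.log_le_log (by positivity) hl
      rw [hlogl] at this
      rw [hLδ]; linarith
    have hlogSu : Real.log (Sfun E α δ) ≤ f * Real.log (1/δ) + Real.log C := by
      have := Real.log_le_log hS0 hu
      rw [hlogu] at this
      rw [hLδ]; linarith
    constructor
    · have h1 : (f * Real.log (1/δ) - Real.log C) / Real.log (1/δ)
          ≤ Real.log (Sfun E α δ) / Real.log (1/δ) := (div_le_div_iff_of_pos_right hL).2 hlogSl
      rw [sub_div, mul_div_cancel_right₀ _ hL.ne'] at h1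
      exact h1
    · have h1 : Real.log (Sfun E α δ) / Real.log (1/δ)
          ≤ (f * Real.log (1/δ) + Real.log C) / Real.log (1/δ) := (div_le_div_iff_of_pos_right hL).2 hlogSu
      rw [add_div, mul_div_cancel_right₀ _ hL.ne'] at h1
      exact h1
  have htend : Tendsto (fun δ : ℝ => Real.log (Sfun E α δ) / Real.log (1/δ))
      (nhdsWithin (0:ℝ) (Set.Ioi 0)) (nhds f) :=
    tendsto_of_tendsto_of_tendsto_of_le_of_le' hlo hhi
      (hbounds.mono fun δ h => h.1) (hbounds.mono fun δ h => h.2)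
  rw [nuSharp_eq_limsup]
  exact htend.limsup_eq
end
end

section
/- Let d ≥ 2 and E ⊆ [1,2] nonempty. For the spherical maximal operator M_E f(x) = sup_{t∈E} |A_t f(x)| (where A_t is the spherical average of radius t), if M_E is bounded from radial L^p(ℝ^d) to L^q(ℝ^d) with 1 ≤ p, q < ∞, then p ≤ q. Concretely, for the radial test functions f_k(x) = 2^{−k(d−1)/p} Σ_{n=1}^{2^{k−5}} 1_{[2^k+8n+1, 2^k+8n+7]}(|x|), one has ‖f_k‖_p ≲ 2^{k/p} and ‖M_E f_k‖_q ≳ 2^{−k(d−1)(1/p−1/q)} 2^{k/q}, so the operator norm ratio ‖M_E f_k‖_q/‖f_k‖_p ≳ 2^{−kd(1/p−1/q)} forces p ≤ q as k → ∞. -/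
open MeasureTheory Filter Set
open scoped ENNReal NNReal

noncomputable section

/-- The spherical average `A_t f (x)`: the average of `f` over the sphere of
radius `t` centered at `x`, with respect to the natural surface measure. -/
def sphAvg (d : ℕ) (f : EuclideanSpace ℝ (Fin d) → ℝ) (t : ℝ)
    (x : EuclideanSpace ℝ (Fin d)) : ℝ :=
  ⨍ y : Metric.sphere (0 : EuclideanSpace ℝ (Fin d)) 1,
    f (x + t • (y : EuclideanSpace ℝ (Fin d))) ∂((volume : Measure (EuclideanSpace ℝ (Fin d))).toSphere)

/-- The spherical maximal function with dilations restricted to `E`. -/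
def maxSph (d : ℕ) (E : Set ℝ) (f : EuclideanSpace ℝ (Fin d) → ℝ)
    (x : EuclideanSpace ℝ (Fin d)) : ℝ :=
  ⨆ t : E, |sphAvg d f t x|

/-- A function on `ℝ^d` is radial if it only depends on the norm. -/
def IsRadial {d : ℕ} (f : EuclideanSpace ℝ (Fin d) → ℝ) : Prop :=
  ∀ x y : EuclideanSpace ℝ (Fin d), ‖x‖ = ‖y‖ → f x = f y

theorem le_of_maximal_bound (d : ℕ) (hd : 2 ≤ d) (E : Set ℝ)
    (hE : E ⊆ Set.Icc 1 2) (hne : E.Nonempty)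
    (p q : ℝ) (hp : 1 ≤ p) (hq : 1 ≤ q)
    (C : ℝ≥0∞) (hC : C ≠ ⊤)
    (hbound : ∀ f : EuclideanSpace ℝ (Fin d) → ℝ, Measurable f → IsRadial f →
      eLpNorm (maxSph d E f) (ENNReal.ofReal q) volume ≤
        C * eLpNorm f (ENNReal.ofReal p) volume) :
    p ≤ q := by
  by_contra hcon
  push_neg at hcon
  obtain ⟨t₀, ht₀⟩ := hne
  have hp0 : (0:ℝ) < p := lt_of_lt_of_le one_pos hp
  have hq0 : (0:ℝ) < q := lt_of_lt_of_le one_pos hq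
  have hd0 : (0:ℝ) < d := by exact_mod_cast (by omega : 0 < d)
  set ν := (volume : Measure (EuclideanSpace ℝ (Fin d))).toSphere with hν
  have hdim : Module.finrank ℝ (EuclideanSpace ℝ (Fin d)) = d := finrank_euclideanSpace_fin
  haveI : Nontrivial (EuclideanSpace ℝ (Fin d)) :=
    Module.nontrivial_of_finrank_pos (R := ℝ) (by rw [hdim]; omega)
  have hνuniv : ν Set.univ ≠ 0 := by
    rw [hν, Measure.toSphere_apply_univ, hdim]
    have h1 : (d : ℝ≥0∞) ≠ 0 := by exact_mod_cast (by omega : d ≠ 0)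
    have h2 : volume (Metric.ball (0 : EuclideanSpace ℝ (Fin d)) 1) ≠ 0 :=
      (Metric.measure_ball_pos _ _ one_pos).ne'
    exact mul_ne_zero h1 h2
  haveI : NeZero ν := ⟨Measure.measure_univ_ne_zero.1 hνuniv⟩
  have hcν : 0 < (ν Set.univ).toReal := ENNReal.toReal_pos hνuniv (measure_ne_top _ _)
  have hQ0 : (ENNReal.ofReal q) ≠ 0 := (ENNReal.ofReal_pos.2 hq0).ne'
  have hQT : (ENNReal.ofReal q) ≠ ⊤ := ENNReal.ofReal_ne_top
  have hP0 : (ENNReal.ofReal p) ≠ 0 := (ENNReal.ofReal_pos.2 hp0).ne'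
  have hPT : (ENNReal.ofReal p) ≠ ⊤ := ENNReal.ofReal_ne_top
  -- Key inequality from testing against the indicator of a ball of radius S + 2
  have key : ∀ S : ℝ, 0 ≤ S →
      (volume (Metric.closedBall (0:EuclideanSpace ℝ (Fin d)) S)) ^ (1/q) ≤
        C * (volume (Metric.closedBall (0:EuclideanSpace ℝ (Fin d)) (S+2))) ^ (1/p) := by
    intro S hS
    set R := S + 2 with hR
    set f : EuclideanSpace ℝ (Fin d) → ℝ :=
      (Metric.closedBall (0:EuclideanSpace ℝ (Fin d)) R).indicator (fun _ => (1:ℝ)) with hfdef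
    have hmeas : Measurable f := measurable_const.indicator measurableSet_closedBall
    have hrad : IsRadial f := by
      intro x y hxy
      have hmemiff : x ∈ Metric.closedBall (0:EuclideanSpace ℝ (Fin d)) R ↔
          y ∈ Metric.closedBall (0:EuclideanSpace ℝ (Fin d)) R := by
        simp [mem_closedBall_zero_iff, hxy]
      rw [hfdef]
      by_cases hx : x ∈ Metric.closedBall (0:EuclideanSpace ℝ (Fin d)) R
      · rw [Set.indicator_of_mem hx, Set.indicator_of_mem (hmemiff.1 hx)]
      · rw [Set.indicator_of_notMem hx, Set.indicator_of_notMem (fun h => hx (hmemiff.2 h))]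
    have hfle : ∀ z, ‖f z‖ ≤ 1 := by
      intro z
      by_cases hz : z ∈ Metric.closedBall (0:EuclideanSpace ℝ (Fin d)) R
      · simp [hfdef, hz]
      · simp [hfdef, hz]
    -- uniform bound on spherical averages
    have hA : ∀ (t : ℝ) (x : EuclideanSpace ℝ (Fin d)), |sphAvg d f t x| ≤ 1 := by
      intro t x
      have hI : ‖∫ y : Metric.sphere (0:EuclideanSpace ℝ (Fin d)) 1,
          f (x + t • (y : EuclideanSpace ℝ (Fin d))) ∂ν‖ ≤ 1 * (ν Set.univ).toReal :=
        norm_integral_le_of_norm_le_const (Filter.Eventually.of_forall fun y => hfle _)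
      rw [one_mul, Real.norm_eq_abs] at hI
      have heq : |sphAvg d f t x| = (ν Set.univ).toReal⁻¹ *
          |∫ y : Metric.sphere (0:EuclideanSpace ℝ (Fin d)) 1,
            f (x + t • (y : EuclideanSpace ℝ (Fin d))) ∂ν| := by
        simp only [sphAvg, ← hν, average_eq, smul_eq_mul, abs_mul, abs_inv, measureReal_def,
          abs_of_nonneg ENNReal.toReal_nonneg]
      rw [heq]
      calc (ν Set.univ).toReal⁻¹ *
            |∫ y : Metric.sphere (0:EuclideanSpace ℝ (Fin d)) 1,
              f (x + t • (y : EuclideanSpace ℝ (Fin d))) ∂ν|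
          ≤ (ν Set.univ).toReal⁻¹ * (ν Set.univ).toReal :=
            mul_le_mul_of_nonneg_left hI (inv_nonneg.2 ENNReal.toReal_nonneg)
        _ = 1 := inv_mul_cancel₀ hcν.ne'
    -- the spherical averages equal 1 on the smaller ball
    have hval : ∀ t ∈ E, ∀ x : EuclideanSpace ℝ (Fin d), ‖x‖ ≤ S → sphAvg d f t x = 1 := by
      intro t ht x hx
      have ht2 := hE ht
      have hpt : ∀ y : Metric.sphere (0:EuclideanSpace ℝ (Fin d)) 1,
          f (x + t • (y : EuclideanSpace ℝ (Fin d))) = 1 := by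
        intro y
        have hy : ‖(y : EuclideanSpace ℝ (Fin d))‖ = 1 := by
          simpa using mem_sphere_zero_iff_norm.1 y.2
        have hmem : x + t • (y:EuclideanSpace ℝ (Fin d)) ∈
            Metric.closedBall (0:EuclideanSpace ℝ (Fin d)) R := by
          rw [Metric.mem_closedBall, dist_zero_right]
          calc ‖x + t • (y:EuclideanSpace ℝ (Fin d))‖
              ≤ ‖x‖ + ‖t • (y:EuclideanSpace ℝ (Fin d))‖ := norm_add_le _ _
            _ = ‖x‖ + |t| := by rw [norm_smul, hy, Real.norm_eq_abs, mul_one]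
            _ ≤ S + 2 := add_le_add hx
                (by rw [abs_of_nonneg (le_trans zero_le_one ht2.1)]; exact ht2.2)
        simp [hfdef, hmem]
      have : (fun y : Metric.sphere (0:EuclideanSpace ℝ (Fin d)) 1 =>
          f (x + t • (y : EuclideanSpace ℝ (Fin d)))) = fun _ => (1:ℝ) := funext hpt
      simp only [sphAvg, ← hν, this]
      exact average_const ν 1
    -- lower bound for the maximal function
    have hmax : ∀ x : EuclideanSpace ℝ (Fin d), ‖x‖ ≤ S → 1 ≤ maxSph d E f x := by
      intro x hx
      have hb : BddAbove (Set.range fun t : E => |sphAvg d f (t:ℝ) x|) :=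
        ⟨1, by rintro v ⟨t, rfl⟩; exact hA t x⟩
      have h1 := le_ciSup hb (⟨t₀, ht₀⟩ : E)
      rw [maxSph]
      simpa [hval t₀ ht₀ x hx] using h1
    -- compare eLpNorms
    have hlow : eLpNorm
        ((Metric.closedBall (0:EuclideanSpace ℝ (Fin d)) S).indicator fun _ => (1:ℝ))
        (ENNReal.ofReal q) volume ≤ eLpNorm (maxSph d E f) (ENNReal.ofReal q) volume := by
      apply eLpNorm_mono
      intro x
      by_cases hx : x ∈ Metric.closedBall (0:EuclideanSpace ℝ (Fin d)) S
      · rw [Set.indicator_of_mem hx]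
        have h1 := hmax x (by simpa [Metric.mem_closedBall, dist_zero_right] using hx)
        rw [Real.norm_eq_abs, Real.norm_eq_abs, abs_one]
        exact le_trans h1 (le_abs_self _)
      · rw [Set.indicator_of_notMem hx]
        simpa using norm_nonneg _
    have h1 := hlow.trans (hbound f hmeas hrad)
    rw [hfdef, eLpNorm_indicator_const measurableSet_closedBall hQ0 hQT,
      eLpNorm_indicator_const measurableSet_closedBall hP0 hPT,
      ENNReal.toReal_ofReal hq0.le, ENNReal.toReal_ofReal hp0.le] at h1
    simpa using h1
  -- pass to real numbers
  set B := volume (Metric.ball (0 : EuclideanSpace ℝ (Fin d)) 1) with hB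
  have hB0 : B ≠ 0 := (Metric.measure_ball_pos _ _ one_pos).ne'
  have hBT : B ≠ ⊤ := measure_ball_lt_top.ne
  set b := B.toReal with hbdef
  have hb0 : 0 < b := ENNReal.toReal_pos hB0 hBT
  set c := C.toReal with hcdef
  have hc0 : 0 ≤ c := ENNReal.toReal_nonneg
  have hvol : ∀ r : ℝ, 0 ≤ r →
      volume (Metric.closedBall (0:EuclideanSpace ℝ (Fin d)) r)
        = ENNReal.ofReal (r ^ d) * B := by
    intro r hr
    rw [hB, Measure.addHaar_closedBall _ _ hr, hdim]
  have keyR : ∀ S : ℝ, 0 ≤ S → (S ^ d * b) ^ (1/q) ≤ c * ((S+2) ^ d * b) ^ (1/p) := by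
    intro S hS
    have h := key S hS
    rw [hvol S hS, hvol (S+2) (by linarith)] at h
    have hfin : C * (ENNReal.ofReal ((S+2)^d) * B) ^ (1/p) ≠ ⊤ := by
      apply ENNReal.mul_ne_top hC
      exact (ENNReal.rpow_lt_top_of_nonneg (by positivity)
        (ENNReal.mul_ne_top ENNReal.ofReal_ne_top hBT)).ne
    have h2 := ENNReal.toReal_mono hfin h
    rw [ENNReal.toReal_mul, ← ENNReal.toReal_rpow, ← ENNReal.toReal_rpow,
      ENNReal.toReal_mul, ENNReal.toReal_mul,
      ENNReal.toReal_ofReal (by positivity), ENNReal.toReal_ofReal (by positivity)] at h2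
    exact h2
  -- final contradiction: the ratio blows up as S → ∞
  set ε := d/q - d/p with hε
  have hεpos : 0 < ε := by
    have h : (d:ℝ)/p < d/q := div_lt_div_of_pos_left hd0 hq0 hcon
    rw [hε]
    linarith
  set K := c * ((2:ℝ)^d * b) ^ (1/p) with hK
  have hK0 : 0 ≤ K := by positivity
  set b1 := b ^ (1/q) with hb1
  have hb1pos : 0 < b1 := Real.rpow_pos_of_pos hb0 _
  have main : ∀ S : ℝ, 2 ≤ S → S ^ ε ≤ K / b1 := by
    intro S hS
    have hS0 : (0:ℝ) < S := by linarith
    have h := keyR S (by linarith)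
    -- (S+2)^d ≤ (2S)^d
    have hstep : ((S+2) ^ d * b) ^ (1/p) ≤ ((2:ℝ)^d * b) ^ (1/p) * S ^ ((d:ℝ)/p) := by
      have h1 : ((S+2):ℝ) ^ d ≤ (2*S) ^ d :=
        pow_le_pow_left₀ (by linarith) (by linarith) d
      have h2 : ((S+2) ^ d * b) ^ (1/p) ≤ ((2*S) ^ d * b) ^ (1/p) :=
        Real.rpow_le_rpow (by positivity) (by nlinarith) (by positivity)
      have h3 : ((2*S:ℝ) ^ d * b) = ((2:ℝ)^d * b) * S ^ d := by ring
      have h4 : (((2:ℝ)^d * b) * S ^ d) ^ (1/p)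
          = ((2:ℝ)^d * b) ^ (1/p) * (S ^ d) ^ (1/p) :=
        Real.mul_rpow (by positivity) (by positivity)
      have h5 : ((S:ℝ) ^ d) ^ (1/p) = S ^ ((d:ℝ)/p) := by
        rw [← Real.rpow_natCast S d, ← Real.rpow_mul hS0.le, mul_one_div]
      rw [h3, h4, h5] at h2
      exact h2
    have hlhs : (S ^ d * b) ^ (1/q) = S ^ ((d:ℝ)/q) * b1 := by
      rw [Real.mul_rpow (by positivity) hb0.le, ← Real.rpow_natCast S d,
        ← Real.rpow_mul hS0.le, mul_one_div, hb1]
    have hmain : S ^ ((d:ℝ)/q) * b1 ≤ K * S ^ ((d:ℝ)/p) := by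
      rw [← hlhs]
      calc (S ^ d * b) ^ (1/q) ≤ c * ((S+2) ^ d * b) ^ (1/p) := h
        _ ≤ c * (((2:ℝ)^d * b) ^ (1/p) * S ^ ((d:ℝ)/p)) :=
            mul_le_mul_of_nonneg_left hstep hc0
        _ = K * S ^ ((d:ℝ)/p) := by rw [hK]; ring
    have hsplit : S ^ ((d:ℝ)/q) = S ^ ε * S ^ ((d:ℝ)/p) := by
      rw [← Real.rpow_add hS0]
      congr 1
      rw [hε]; ring
    rw [hsplit] at hmain
    have hSp : 0 < S ^ ((d:ℝ)/p) := Real.rpow_pos_of_pos hS0 _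
    rw [le_div_iff₀ hb1pos]
    have : (S ^ ε * b1) * S ^ ((d:ℝ)/p) ≤ K * S ^ ((d:ℝ)/p) := by nlinarith
    exact le_of_mul_le_mul_right this hSp
  -- choose S large enough
  set T := (K / b1 + 1) ^ (1/ε) with hT
  have hx0 : (0:ℝ) < K / b1 + 1 := by positivity
  have hT0 : 0 ≤ T := Real.rpow_nonneg hx0.le _
  set S := max 2 T with hS
  have hS2 : (2:ℝ) ≤ S := le_max_left _ _
  have hTS : T ≤ S := le_max_right _ _
  have hTε : T ^ ε = K / b1 + 1 := by
    rw [hT, ← Real.rpow_mul hx0.le, one_div, inv_mul_cancel₀ hεpos.ne', Real.rpow_one]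
  have h1 : K / b1 + 1 ≤ S ^ ε := by
    rw [← hTε]
    exact Real.rpow_le_rpow hT0 hTS hεpos.le
  have h2 := main S hS2
  linarith
end
end

section
/- Let t_L ∈ [1/2,5/2], 0 < δ < 1, and let t ∈ [1,2] and x = (x_1, 0, …, 0) ∈ ℝ^d with x_1 ≥ 0 and x_1 − t = −t_L + c_1 δ where |c_1| ≤ 1/10. Let c_2 > 0 with c_2² > 20/9. Then for every y = (y_1, y′) on the unit sphere S^{d−1} with y_1 ≥ 0 and |y′| ≤ c_2^{−1}(δ/x_1)^{1/2}, one has t_L − δ/10 ≤ |x − t y| ≤ t_L + δ. -/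
open MeasureTheory Set

noncomputable section

set_option maxHeartbeats 1000000 in
theorem sphere_cap_distance_bound (d : ℕ) (hd : 2 ≤ d)
    (tL δ t x1 c1 c2 : ℝ)
    (htL : tL ∈ Set.Icc (1/2 : ℝ) (5/2)) (hδ : δ ∈ Set.Ioo (0:ℝ) 1)
    (ht : t ∈ Set.Icc (1:ℝ) 2) (hx1 : 0 ≤ x1)
    (hc1 : |c1| ≤ 1/10) (hx1t : x1 - t = -tL + c1 * δ)
    (ht2tL : t ≤ 2 * tL)
    (hc2 : 20/9 < c2 ^ 2)
    (y : EuclideanSpace ℝ (Fin d)) (hy : ‖y‖ = 1)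
    (hy1 : 0 ≤ y (⟨0, by omega⟩ : Fin d))
    (hy' : Real.sqrt (1 - (y (⟨0, by omega⟩ : Fin d)) ^ 2) ≤
      c2⁻¹ * Real.sqrt (δ / x1)) :
    tL - δ/10 ≤ ‖(x1 • EuclideanSpace.single (⟨0, by omega⟩ : Fin d) (1:ℝ)) - t • y‖ ∧
    ‖(x1 • EuclideanSpace.single (⟨0, by omega⟩ : Fin d) (1:ℝ)) - t • y‖ ≤ tL + δ := by
  set i0 : Fin d := ⟨0, by omega⟩ with hi0
  set y1 : ℝ := y i0 with hy1def
  set e : EuclideanSpace ℝ (Fin d) := EuclideanSpace.single i0 (1:ℝ) with he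
  have hne : ‖e‖ = 1 := by simp [he, EuclideanSpace.norm_single]
  have hinner : inner ℝ e y = y1 := by
    simp [he, EuclideanSpace.inner_single_left, hy1def]
  -- y1 ≤ 1
  have hy1le : y1 ≤ 1 := by
    have := real_inner_le_norm e y
    rw [hinner, hne, hy] at this; linarith
  have h1my1sq : 0 ≤ 1 - y1 ^ 2 := by nlinarith
  -- norm squared computation
  set N : ℝ := ‖x1 • e - t • y‖ with hN
  have hNnn : 0 ≤ N := norm_nonneg _
  have hN2 : N ^ 2 = x1 ^ 2 - 2 * (t * x1 * y1) + t ^ 2 := by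
    rw [hN, norm_sub_sq_real, real_inner_smul_left, real_inner_smul_right, hinner,
      norm_smul, norm_smul, hne, hy]
    have ht0 : (0:ℝ) ≤ t := by linarith [ht.1]
    rw [Real.norm_eq_abs, Real.norm_eq_abs, abs_of_nonneg hx1, abs_of_nonneg ht0]
    ring
  obtain ⟨hδ0, hδ1⟩ := hδ
  obtain ⟨htL1, htL2⟩ := htL
  obtain ⟨ht1, ht2⟩ := ht
  -- c2⁻² bound
  have hc2pos : (0:ℝ) < c2 ^ 2 := by linarith
  have hc2ne : c2 ≠ 0 := by
    intro h; rw [h] at hc2pos; simp at hc2pos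
  have hc2inv : c2⁻¹ ^ 2 < 9/20 := by
    have h1 : c2⁻¹ ^ 2 * c2 ^ 2 = 1 := by
      field_simp
    nlinarith [sq_nonneg c2⁻¹]
  have hc2invnn : 0 ≤ c2⁻¹ ^ 2 := sq_nonneg _
  -- key estimate : x1 * (1 - y1) ≤ (9/20) * δ
  have hkey : x1 * (1 - y1) ≤ 9/20 * δ := by
    rcases eq_or_lt_of_le hx1 with h0 | hx1pos
    · rw [← h0, zero_mul]; positivity
    · have hdx : 0 ≤ δ / x1 := by positivity
      have hsq : 1 - y1 ^ 2 ≤ c2⁻¹ ^ 2 * (δ / x1) := by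
        have h2 : Real.sqrt (1 - y1 ^ 2) ^ 2 ≤ (c2⁻¹ * Real.sqrt (δ / x1)) ^ 2 :=
          pow_le_pow_left₀ (Real.sqrt_nonneg _) hy' 2
        rw [Real.sq_sqrt h1my1sq] at h2
        rw [mul_pow, Real.sq_sqrt hdx] at h2
        exact h2
      have h3 : x1 * (1 - y1 ^ 2) ≤ c2⁻¹ ^ 2 * δ := by
        have := mul_le_mul_of_nonneg_left hsq (le_of_lt hx1pos)
        calc x1 * (1 - y1 ^ 2) ≤ x1 * (c2⁻¹ ^ 2 * (δ / x1)) := this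
          _ = c2⁻¹ ^ 2 * δ := by field_simp
      have h4 : c2⁻¹ ^ 2 * δ ≤ 9/20 * δ := by
        have := mul_le_mul_of_nonneg_right hc2inv.le hδ0.le
        linarith
      have h5 : 0 ≤ x1 * y1 * (1 - y1) := by
        apply mul_nonneg (mul_nonneg hx1 hy1); linarith
      have e1 : x1 * (1 - y1) = x1 * (1 - y1 ^ 2) - x1 * y1 * (1 - y1) := by ring
      linarith [h3, h4, h5, e1]
  have hkeynn : 0 ≤ x1 * (1 - y1) := mul_nonneg hx1 (by linarith)
  have habs : -(1/10) ≤ c1 ∧ c1 ≤ 1/10 := abs_le.mp hc1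
  have ht0 : 0 ≤ t := by linarith
  have hN2' : N ^ 2 = (tL - c1 * δ) ^ 2 + 2 * t * (x1 * (1 - y1)) := by
    have : N ^ 2 = (x1 - t) ^ 2 + 2 * t * (x1 * (1 - y1)) := by rw [hN2]; ring
    rw [this, hx1t]; ring
  have hterm : 0 ≤ 2 * t * (x1 * (1 - y1)) := by positivity
  clear_value N e y1
  clear hy hy' hy1 hinner hne hy1def hN he hi0 hN2 hy1le h1my1sq y e i0 hd
  constructor
  · -- lower bound
    have hlb0 : 0 ≤ tL - δ/10 := by linarith
    have hle : tL - δ/10 ≤ tL - c1 * δ := by nlinarith [habs.2]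
    have hsqle : (tL - δ/10) ^ 2 ≤ N ^ 2 := by
      rw [hN2']
      linarith [pow_le_pow_left₀ hlb0 hle 2, hterm]
    calc tL - δ/10 = Real.sqrt ((tL - δ/10) ^ 2) := (Real.sqrt_sq hlb0).symm
      _ ≤ Real.sqrt (N ^ 2) := Real.sqrt_le_sqrt hsqle
      _ = N := Real.sqrt_sq hNnn
  · -- upper bound
    have hub0 : 0 ≤ tL + δ := by linarith
    have h2t : 2 * t * (x1 * (1 - y1)) ≤ 2 * (2 * tL) * (9/20 * δ) :=
      mul_le_mul (by linarith) hkey hkeynn (by linarith)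
    have hsqle : N ^ 2 ≤ (tL + δ) ^ 2 := by
      rw [hN2']
      have hA : 0 ≤ (c1 + 1/10) * (tL * δ) := by
        apply mul_nonneg (by linarith [habs.1]) (by positivity)
      have hB : c1 ^ 2 * δ ^ 2 ≤ δ ^ 2 := by
        have hc1sq : c1 ^ 2 ≤ 1 := by nlinarith [habs.1, habs.2]
        nlinarith [sq_nonneg δ]
      nlinarith [hA, hB, h2t]
    calc N = Real.sqrt (N ^ 2) := (Real.sqrt_sq hNnn).symm
      _ ≤ Real.sqrt ((tL + δ) ^ 2) := Real.sqrt_le_sqrt hsqle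
      _ = tL + δ := Real.sqrt_sq hub0
end
end
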